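/- arXiv:1408.2559 — 2 statements merged into one kernel-verified Lean document; each statement's English description precedes it below -/
import Mathlib

section
/- Let U be a finite set, let 𝓐 be a collection of subsets of U, and let 𝓣 ⊆ 𝓐. Suppose (i) there is a set T₀ ∈ 𝓣 with |T₀| = N₀ such that every subset of T₀ belongs to 𝓣, and (ii) there are sets C₁,…,C_M ⊆ U, each of size at most N₁, such that every member of 𝓐 \ 𝓣 is a subset of some C_i. Then for every integer m with 0 ≤ m ≤ N₀, the number of members of 𝓐 \ 𝓣 of size exactly m is at most M·binom(N₁,m), while the number of members of 𝓣 of size exactly m is at least binom(N₀,m); consequently, the proportion of members of 𝓐 of size exactly m that lie in 𝓐 \ 𝓣 is at most M·(N₁/N₀)^m. -/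
open Finset

private lemma choose_mul_pow_le {a b m : ℕ} (h : a ≤ b) :
    a.choose m * b ^ m ≤ a ^ m * b.choose m := by
  have key : a.descFactorial m * b ^ m ≤ a ^ m * b.descFactorial m := by
    rw [Nat.descFactorial_eq_prod_range, Nat.descFactorial_eq_prod_range,
      show b ^ m = ∏ _i ∈ Finset.range m, b by simp,
      show a ^ m = ∏ _i ∈ Finset.range m, a by simp,
      ← Finset.prod_mul_distrib, ← Finset.prod_mul_distrib]
    apply Finset.prod_le_prod'
    intro i _
    calc (a - i) * b ≤ a * b - i * b := by
          rw [Nat.sub_mul]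
      _ ≤ a * b - i * a := by
          apply Nat.sub_le_sub_left
          exact Nat.mul_le_mul_left i h
      _ ≤ a * (b - i) := by
          rw [Nat.mul_sub, mul_comm i a]
  have h1 : a.choose m * b ^ m * m.factorial ≤ a ^ m * b.choose m * m.factorial := by
    calc a.choose m * b ^ m * m.factorial
        = (m.factorial * a.choose m) * b ^ m := by ring
      _ = a.descFactorial m * b ^ m := by rw [← Nat.descFactorial_eq_factorial_mul_choose]
      _ ≤ a ^ m * b.descFactorial m := key
      _ = a ^ m * (m.factorial * b.choose m) := by rw [Nat.descFactorial_eq_factorial_mul_choose]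
      _ = a ^ m * b.choose m * m.factorial := by ring
  exact Nat.le_of_mul_le_mul_right h1 m.factorial_pos

theorem enumeration_lemma_fixed_size {α : Type*} [Fintype α] [DecidableEq α]
    (𝓐 𝓣 : Finset (Finset α)) (h𝓣𝓐 : 𝓣 ⊆ 𝓐)
    (N₀ N₁ M : ℕ) (T₀ : Finset α) (hT₀ : T₀ ∈ 𝓣) (hT₀card : T₀.card = N₀)
    (hdown : ∀ S : Finset α, S ⊆ T₀ → S ∈ 𝓣)
    (C : Fin M → Finset α) (hC : ∀ i, (C i).card ≤ N₁)
    (hcover : ∀ A ∈ 𝓐 \ 𝓣, ∃ i, A ⊆ C i)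
    (m : ℕ) (hm : m ≤ N₀) :
    ((𝓐 \ 𝓣).filter (fun A => A.card = m)).card ≤ M * N₁.choose m ∧
    N₀.choose m ≤ (𝓣.filter (fun A => A.card = m)).card ∧
    (((𝓐 \ 𝓣).filter (fun A => A.card = m)).card : ℝ) /
        ((𝓐.filter (fun A => A.card = m)).card : ℝ) ≤
      (M : ℝ) * ((N₁ : ℝ) / (N₀ : ℝ)) ^ m := by
  classical
  have h1 : ((𝓐 \ 𝓣).filter (fun A => A.card = m)).card ≤ M * N₁.choose m := by
    have hsub : ((𝓐 \ 𝓣).filter (fun A => A.card = m)) ⊆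
        Finset.univ.biUnion (fun i : Fin M => (C i).powersetCard m) := by
      intro A hA
      simp only [mem_filter] at hA
      obtain ⟨i, hi⟩ := hcover A hA.1
      simp only [mem_biUnion, mem_powersetCard]
      exact ⟨i, mem_univ i, hi, hA.2⟩
    calc ((𝓐 \ 𝓣).filter (fun A => A.card = m)).card
        ≤ (Finset.univ.biUnion (fun i : Fin M => (C i).powersetCard m)).card :=
          card_le_card hsub
      _ ≤ ∑ i : Fin M, ((C i).powersetCard m).card := card_biUnion_le
      _ ≤ ∑ _i : Fin M, N₁.choose m := by
          apply Finset.sum_le_sum; intro i _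
          rw [card_powersetCard]
          exact Nat.choose_le_choose m (hC i)
      _ = M * N₁.choose m := by simp [mul_comm]
  have h2 : N₀.choose m ≤ (𝓣.filter (fun A => A.card = m)).card := by
    have hsub : T₀.powersetCard m ⊆ 𝓣.filter (fun A => A.card = m) := by
      intro A hA
      rw [mem_powersetCard] at hA
      exact mem_filter.2 ⟨hdown A hA.1, hA.2⟩
    calc N₀.choose m = (T₀.powersetCard m).card := by rw [card_powersetCard, hT₀card]
      _ ≤ _ := card_le_card hsub
  refine ⟨h1, h2, ?_⟩
  set X := ((𝓐 \ 𝓣).filter (fun A => A.card = m)).card with hX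
  set T := (𝓣.filter (fun A => A.card = m)).card with hT
  set tot := (𝓐.filter (fun A => A.card = m)).card with htot
  have hsplit : X + T ≤ tot := by
    rw [hX, hT, htot, ← card_union_of_disjoint]
    · apply card_le_card
      intro A hA
      simp only [mem_union, mem_filter] at hA ⊢
      rcases hA with h | h
      · exact ⟨(mem_sdiff.1 h.1).1, h.2⟩
      · exact ⟨h𝓣𝓐 h.1, h.2⟩
    · apply disjoint_filter_filter
      exact sdiff_disjoint
  have hT1 : 1 ≤ T := le_trans (Nat.choose_pos hm) h2
  -- key nat inequality
  have hkey : X * N₀ ^ m ≤ M * N₁ ^ m * (X + T) := by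
    rcases Nat.eq_zero_or_pos M with hM | hM
    · have : X = 0 := by
        have := h1; rw [hM, Nat.zero_mul] at this; omega
      simp [this]
    rcases le_or_gt N₀ N₁ with hN | hN
    · calc X * N₀ ^ m ≤ X * N₁ ^ m := Nat.mul_le_mul_left X (Nat.pow_le_pow_left hN m)
        _ ≤ M * (X + T) * N₁ ^ m := by
            apply Nat.mul_le_mul_right
            calc X ≤ X + T := Nat.le_add_right X T
              _ = 1 * (X + T) := (one_mul _).symm
              _ ≤ M * (X + T) := Nat.mul_le_mul_right _ hM
        _ = M * N₁ ^ m * (X + T) := by ring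
    · calc X * N₀ ^ m ≤ M * N₁.choose m * N₀ ^ m := Nat.mul_le_mul_right _ h1
        _ = M * (N₁.choose m * N₀ ^ m) := by ring
        _ ≤ M * (N₁ ^ m * N₀.choose m) := Nat.mul_le_mul_left M (choose_mul_pow_le hN.le)
        _ ≤ M * (N₁ ^ m * T) := Nat.mul_le_mul_left M (Nat.mul_le_mul_left _ h2)
        _ = M * N₁ ^ m * T := by ring
        _ ≤ M * N₁ ^ m * (X + T) := Nat.mul_le_mul_left _ (Nat.le_add_left T X)
  have htotpos : (0 : ℝ) < tot := by
    have : 1 ≤ tot := le_trans (by omega) hsplit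
    exact_mod_cast Nat.lt_of_lt_of_le Nat.zero_lt_one this
  rcases Nat.eq_zero_or_pos m with hm0 | hmpos
  · subst hm0
    rw [pow_zero, mul_one, div_le_iff₀ htotpos]
    have : X * 1 ≤ M * 1 * (X + T) := by simpa using hkey
    have hXT : (X : ℝ) ≤ M * (X + T) := by
      simp only [Nat.mul_one, Nat.one_mul] at this ⊢
      exact_mod_cast this
    calc (X : ℝ) ≤ M * (X + T) := hXT
      _ ≤ M * tot := by
          apply mul_le_mul_of_nonneg_left _ (by positivity)
          exact_mod_cast hsplit
  · have hN₀pos : 0 < N₀ := lt_of_lt_of_le hmpos hm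
    have hN₀pow : (0 : ℝ) < (N₀ : ℝ) ^ m := by positivity
    rw [div_pow, ← mul_div_assoc, div_le_div_iff₀ htotpos hN₀pow]
    calc (X : ℝ) * N₀ ^ m ≤ M * N₁ ^ m * (X + T) := by exact_mod_cast hkey
      _ ≤ M * N₁ ^ m * tot := by
          apply mul_le_mul_of_nonneg_left _ (by positivity)
          exact_mod_cast hsplit
      _ = M * N₁ ^ m * tot := rfl
end

section
/- For all integers n > k > t ≥ 1, the number of maximal t-intersecting k-uniform hypergraphs on [n] is at most Σ_{i=0}^{binom(2(k−t)+1,k−t)} binom(binom(n,k), i), which is at most binom(n,k)^{binom(2(k−t)+1,k−t)}. -/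
/-- A family of edges forms a `k`-uniform hypergraph on `[n]`. -/
def IsKUniform (n k : ℕ) (H : Finset (Finset (Fin n))) : Prop :=
  ∀ e ∈ H, e.card = k

/-- A hypergraph is `t`-intersecting if any two of its edges share at least `t` vertices. -/
def IsTIntersectingHyp (n t : ℕ) (H : Finset (Finset (Fin n))) : Prop :=
  ∀ e ∈ H, ∀ f ∈ H, t ≤ (e ∩ f).card

/-- A `t`-intersecting `k`-uniform hypergraph is maximal if it is not properly
contained in any other `t`-intersecting `k`-uniform hypergraph on `[n]`. -/
def IsMaximalTIntersectingHyp (n k t : ℕ) (H : Finset (Finset (Fin n))) : Prop :=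
  IsKUniform n k H ∧ IsTIntersectingHyp n t H ∧
    ∀ H' : Finset (Finset (Fin n)), IsKUniform n k H' → IsTIntersectingHyp n t H' →
      H ⊆ H' → H = H'

namespace NMTIH

open Finset Polynomial Module Submodule Matrix

noncomputable section

/-! ## Part A : determinant machinery -/

variable {r : ℕ}

/-- Row/column index type, `Fin r ⊕ Fin r`. -/
abbrev tau (r : ℕ) : Type := Fin r ⊕ Fin r

/-- Standard basis vector. -/
def std (b : tau r) : tau r → ℝ := fun q => if b = q then 1 else 0

lemma std_injective : Function.Injective (std (r := r)) := by
  intro a b h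
  have := congrFun h b
  simp only [std, if_pos rfl] at this
  by_contra hab
  rw [if_neg hab] at this
  norm_num at this

/-- The determinant of the square matrix whose first `r` rows are `A` and last `r` rows are `C`. -/
def matD (A C : Fin r → tau r → ℝ) : ℝ := (Matrix.of (Sum.elim A C)).det

/-- An enumeration of a finset of cardinality `r` (junk otherwise). -/
noncomputable def enum (S : Finset (tau r)) : Fin r → tau r :=
  fun j => if h : S.card = r then
    ((Fintype.equivFinOfCardEq ((Fintype.card_coe S).trans h)).symm j : S).1
  else Sum.inl j

lemma enum_mem {S : Finset (tau r)} (h : S.card = r) (j : Fin r) : enum S j ∈ S := by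
  simp only [enum, dif_pos h]
  exact Subtype.mem _

lemma enum_injective {S : Finset (tau r)} (h : S.card = r) :
    Function.Injective (enum (r := r) S) := by
  intro a b hab
  simp only [enum, dif_pos h] at hab
  exact (Equiv.injective _) (Subtype.ext hab)

lemma enum_surj {S : Finset (tau r)} (h : S.card = r) {x : tau r} (hx : x ∈ S) :
    ∃ j, enum S j = x := by
  refine ⟨(Fintype.equivFinOfCardEq ((Fintype.card_coe S).trans h)) ⟨x, hx⟩, ?_⟩
  simp only [enum, dif_pos h, Equiv.symm_apply_apply]

/-- Standard-basis row tuple attached to a finset. -/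
def eT (S : Finset (tau r)) : Fin r → tau r → ℝ := fun j => std (enum S j)

/-- Signs. -/
def eps (S : Finset (tau r)) : ℝ := matD (eT S) (eT Sᶜ)

lemma card_tau : Fintype.card (tau r) = r + r := by
  simp [tau]

lemma card_compl_tau {S : Finset (tau r)} (h : S.card = r) : Sᶜ.card = r := by
  rw [Finset.card_compl, card_tau, h]
  omega

/-- Determinant as a multilinear map in all rows. -/
def detML : MultilinearMap ℝ (fun _ : tau r => (tau r → ℝ)) ℝ :=
  (Matrix.detRowAlternating : (tau r → ℝ) [⋀^tau r]→ₗ[ℝ] ℝ).toMultilinearMap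

/-- Currying: fix the first block of rows. -/
def detCurry : MultilinearMap ℝ (fun _ : Fin r => (tau r → ℝ))
    (MultilinearMap ℝ (fun _ : Fin r => (tau r → ℝ)) ℝ) := detML.currySum

lemma detCurry_apply (A C : Fin r → tau r → ℝ) : detCurry A C = matD A C := rfl

/-- Evaluation of a multilinear map at a point, as a linear map. -/
def evalAt (C : Fin r → tau r → ℝ) :
    MultilinearMap ℝ (fun _ : Fin r => (tau r → ℝ)) ℝ →ₗ[ℝ] ℝ where
  toFun f := f C
  map_add' _ _ := rfl
  map_smul' _ _ := rfl

/-- `matD · C` as a multilinear map in the first `r` rows. -/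
def detLmap (C : Fin r → tau r → ℝ) : MultilinearMap ℝ (fun _ : Fin r => (tau r → ℝ)) ℝ :=
  (evalAt C).compMultilinearMap detCurry

lemma detLmap_apply (A C : Fin r → tau r → ℝ) : detLmap C A = matD A C := rfl

lemma expand_multilinear (f : MultilinearMap ℝ (fun _ : Fin r => (tau r → ℝ)) ℝ)
    (C : Fin r → tau r → ℝ) :
    f C = ∑ j ∈ Fintype.piFinset (fun _ : Fin r => (Finset.univ : Finset (tau r))),
      (∏ i, C i (j i)) * f (fun i => std (j i)) := by
  have hC : f C = f (fun i => ∑ b ∈ Finset.univ, C i b • std b) := by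
    congr 1
    funext i
    exact pi_eq_sum_univ (C i)
  rw [hC, f.map_sum_finset (fun i b => C i b • std b)]
  refine Finset.sum_congr rfl fun j _ => ?_
  rw [f.map_smul_univ]
  simp [smul_eq_mul]

lemma matD_zero_row_eq {A C : Fin r → tau r → ℝ} {p q : tau r} (hne : p ≠ q)
    (h : Sum.elim A C p = Sum.elim A C q) : matD A C = 0 :=
  Matrix.det_zero_of_row_eq hne h

lemma matD_comp_right (A C : Fin r → tau r → ℝ) (π : Equiv.Perm (Fin r)) :
    matD A (C ∘ π) = ((Equiv.Perm.sign π : ℤ) : ℝ) * matD A C := by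
  have key : Matrix.of (Sum.elim A (C ∘ π)) =
      (Matrix.of (Sum.elim A C)).submatrix (Equiv.sumCongr (Equiv.refl (Fin r)) π) id := by
    ext p q
    cases p <;> rfl
  rw [matD, key, Matrix.det_permute, Equiv.Perm.sign_sumCongr]
  simp [matD]

lemma matD_comp_left (A C : Fin r → tau r → ℝ) (π : Equiv.Perm (Fin r)) :
    matD (A ∘ π) C = ((Equiv.Perm.sign π : ℤ) : ℝ) * matD A C := by
  have key : Matrix.of (Sum.elim (A ∘ π) C) =
      (Matrix.of (Sum.elim A C)).submatrix (Equiv.sumCongr π (Equiv.refl (Fin r))) id := by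
    ext p q
    cases p <;> rfl
  rw [matD, key, Matrix.det_permute, Equiv.Perm.sign_sumCongr]
  simp [matD]

lemma sumElim_enum_bijective {S : Finset (tau r)} (h : S.card = r) :
    Function.Bijective (Sum.elim (enum S) (enum Sᶜ)) := by
  rw [← Finite.injective_iff_bijective]
  intro a b hab
  cases a with
  | inl x =>
    cases b with
    | inl y =>
      simp only [Sum.elim_inl] at hab
      exact congrArg _ (enum_injective h hab)
    | inr y =>
      simp only [Sum.elim_inl, Sum.elim_inr] at hab
      have h1 : enum S x ∈ Sᶜ := by rw [hab]; exact enum_mem (card_compl_tau h) y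
      exact absurd (enum_mem h x) (Finset.mem_compl.1 h1)
  | inr x =>
    cases b with
    | inl y =>
      simp only [Sum.elim_inl, Sum.elim_inr] at hab
      have h1 : enum Sᶜ x ∈ S := by rw [hab]; exact enum_mem h y
      exact absurd h1 (Finset.mem_compl.1 (enum_mem (card_compl_tau h) x))
    | inr y =>
      simp only [Sum.elim_inr] at hab
      exact congrArg _ (enum_injective (card_compl_tau h) hab)

lemma eps_eq_sign {S : Finset (tau r)} (h : S.card = r) :
    eps S = ((Equiv.Perm.sign ((Equiv.ofBijective _ (sumElim_enum_bijective h)) : Equiv.Perm (tau r)) : ℤ) : ℝ) := by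
  set ρ : Equiv.Perm (tau r) := Equiv.ofBijective _ (sumElim_enum_bijective h) with hρ
  have hmat : Matrix.of (Sum.elim (eT S) (eT Sᶜ)) = ρ.permMatrix ℝ := by
    ext p q
    have hrow : (Matrix.of (Sum.elim (eT S) (eT Sᶜ))) p q = std (ρ p) q := by
      cases p with
      | inl x => rfl
      | inr x => rfl
    rw [hrow]
    simp [std, Equiv.Perm.permMatrix, PEquiv.toMatrix_apply, Equiv.toPEquiv_apply,
      Option.mem_def]
  rw [eps, matD, hmat, Matrix.det_permutation]

lemma eps_sq {S : Finset (tau r)} (h : S.card = r) : eps S * eps S = 1 := by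
  rw [eps_eq_sign h, ← Int.cast_mul, ← Units.val_mul, ← sq, Int.units_sq, Units.val_one,
    Int.cast_one]

lemma lap_std (A : Fin r → tau r → ℝ) (j : Fin r → tau r) :
    matD A (fun i => std (j i)) =
      ∑ S ∈ Finset.univ.powersetCard r,
        eps S * matD A (eT S) * matD (fun i => std (j i)) (eT Sᶜ) := by
  by_cases hj : Function.Injective j
  · set T : Finset (tau r) := Finset.univ.image j with hTdef
    have hT : T.card = r := by
      rw [hTdef, Finset.card_image_of_injective _ hj, card_univ, Fintype.card_fin]
    have hjT : ∀ i, j i ∈ T := fun i => Finset.mem_image_of_mem _ (mem_univ i)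
    have e₁ : Function.Bijective (fun i : Fin r => (⟨j i, hjT i⟩ : T)) := by
      rw [Fintype.bijective_iff_injective_and_card]
      refine ⟨fun a b hab => hj (congrArg Subtype.val hab), by simp [hT]⟩
    have e₂ : Function.Bijective (fun i : Fin r => (⟨enum T i, enum_mem hT i⟩ : T)) := by
      rw [Fintype.bijective_iff_injective_and_card]
      refine ⟨fun a b hab => enum_injective hT (congrArg Subtype.val hab), by simp [hT]⟩
    set E₁ := Equiv.ofBijective _ e₁ with hE₁
    set E₂ := Equiv.ofBijective _ e₂ with hE₂
    set π : Equiv.Perm (Fin r) := E₁.trans E₂.symm with hπ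
    have hjπ : ∀ i, j i = enum T (π i) := by
      intro i
      have h2 : E₂ (π i) = E₁ i := by
        rw [hπ]; exact E₂.apply_symm_apply _
      have := congrArg Subtype.val h2
      exact this.symm
    have hfun : (fun i => std (j i)) = (eT T) ∘ π := by
      funext i
      simp only [Function.comp_apply, eT]
      rw [hjπ i]
    have hTm : T ∈ Finset.univ.powersetCard r := Finset.mem_powersetCard_univ.2 hT
    rw [Finset.sum_eq_single_of_mem T hTm]
    · rw [hfun, matD_comp_left _ _ π, matD_comp_right _ _ π]
      rw [show matD (eT T) (eT Tᶜ) = eps T from rfl]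
      linear_combination (-(((Equiv.Perm.sign π : ℤ) : ℝ) * matD A (eT T))) * eps_sq hT
    · intro S hS hST
      have hSr : S.card = r := Finset.mem_powersetCard_univ.1 hS
      have hTS : ∃ x ∈ T, x ∉ S := by
        by_contra hc
        push_neg at hc
        exact hST (Finset.eq_of_subset_of_card_le hc (by rw [hT, hSr])).symm
      obtain ⟨x, hxT, hxS⟩ := hTS
      obtain ⟨i₀, _, hi₀⟩ := Finset.mem_image.1 (hTdef ▸ hxT)
      obtain ⟨i₁, hi₁⟩ := enum_surj (card_compl_tau hSr) (Finset.mem_compl.2 hxS)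
      have hz : matD (fun i => std (j i)) (eT Sᶜ) = 0 := by
        refine matD_zero_row_eq (A := fun i => std (j i)) (C := eT Sᶜ)
          (p := Sum.inl i₀) (q := Sum.inr i₁) (by simp) ?_
        simp only [Sum.elim_inl, Sum.elim_inr, eT]
        rw [hi₀, hi₁]
      rw [hz, mul_zero]
  · obtain ⟨i₀, i₁, heq, hne⟩ := Function.not_injective_iff.1 hj
    have hL : matD A (fun i => std (j i)) = 0 := by
      refine matD_zero_row_eq (p := Sum.inr i₀) (q := Sum.inr i₁) (by simp [hne]) ?_
      simp only [Sum.elim_inr]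
      rw [heq]
    rw [hL]
    refine (Finset.sum_eq_zero fun S _ => ?_).symm
    have hz : matD (fun i => std (j i)) (eT Sᶜ) = 0 := by
      refine matD_zero_row_eq (p := Sum.inl i₀) (q := Sum.inl i₁) (by simp [hne]) ?_
      simp only [Sum.elim_inl]
      rw [heq]
    rw [hz, mul_zero]

lemma lap (A C : Fin r → tau r → ℝ) :
    matD A C = ∑ S ∈ Finset.univ.powersetCard r,
      eps S * matD A (eT S) * matD C (eT Sᶜ) := by
  classical
  set pF := Fintype.piFinset (fun _ : Fin r => (Finset.univ : Finset (tau r))) with hpF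
  have e1 : matD A C = ∑ j ∈ pF, (∏ i, C i (j i)) * matD A (fun i => std (j i)) := by
    simpa [detCurry_apply, hpF] using expand_multilinear (detCurry A) C
  have e2 : ∀ S : Finset (tau r),
      matD C (eT Sᶜ) = ∑ j ∈ pF, (∏ i, C i (j i)) * matD (fun i => std (j i)) (eT Sᶜ) := by
    intro S
    simpa [detLmap_apply, hpF] using expand_multilinear (detLmap (eT Sᶜ)) C
  rw [e1]
  calc ∑ j ∈ pF, (∏ i, C i (j i)) * matD A (fun i => std (j i))
      = ∑ j ∈ pF, ∑ S ∈ Finset.univ.powersetCard r,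
          (∏ i, C i (j i)) * (eps S * matD A (eT S) * matD (fun i => std (j i)) (eT Sᶜ)) := by
        refine Finset.sum_congr rfl fun j _ => ?_
        rw [lap_std A j, Finset.mul_sum]
    _ = ∑ S ∈ Finset.univ.powersetCard r, ∑ j ∈ pF,
          (∏ i, C i (j i)) * (eps S * matD A (eT S) * matD (fun i => std (j i)) (eT Sᶜ)) :=
        Finset.sum_comm
    _ = ∑ S ∈ Finset.univ.powersetCard r,
          eps S * matD A (eT S) * matD C (eT Sᶜ) := by
        refine Finset.sum_congr rfl fun S _ => ?_
        rw [e2 S, Finset.mul_sum]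
        refine Finset.sum_congr rfl fun j _ => ?_
        ring

theorem det_system_card_le {ι : Type} [Fintype ι] (hr : 0 < r)
    (u v : ι → Fin r → (tau r → ℝ))
    (huv : ∀ i, matD (u i) (v i) ≠ 0)
    (hvu : ∀ i, matD (v i) (u i) ≠ 0)
    (huv' : ∀ i j, i ≠ j → matD (u i) (v j) = 0)
    (hvu' : ∀ i j, i ≠ j → matD (v i) (u j) = 0)
    (huu : ∀ i j, matD (u i) (u j) = 0) :
    2 * Fintype.card ι ≤ (r + r).choose r := by
  classical
  set pc := (Finset.univ.powersetCard r : Finset (Finset (tau r))) with hpc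
  let fp : (Fin r → tau r → ℝ) → ({S // S ∈ pc} → ℝ) := fun a S => matD a (eT S.1)
  let w : ι ⊕ ι → ({S // S ∈ pc} → ℝ) := Sum.elim (fun i => fp (u i)) (fun i => fp (v i))
  let pair : (Fin r → tau r → ℝ) → (({S // S ∈ pc} → ℝ) →ₗ[ℝ] ℝ) := fun b =>
    { toFun := fun c => ∑ S : {S // S ∈ pc}, eps S.1 * c S * matD b (eT (S.1ᶜ))
      map_add' := fun c d => by
        simp only [Pi.add_apply]
        rw [← Finset.sum_add_distrib]
        exact Finset.sum_congr rfl fun S _ => by ring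
      map_smul' := fun a c => by
        simp only [Pi.smul_apply, smul_eq_mul, RingHom.id_apply]
        rw [Finset.mul_sum]
        exact Finset.sum_congr rfl fun S _ => by ring }
  have hpair : ∀ a b, pair b (fp a) = matD a b := by
    intro a b
    have : pair b (fp a) = ∑ S : {S // S ∈ pc}, eps S.1 * matD a (eT S.1) * matD b (eT (S.1ᶜ)) :=
      rfl
    rw [this, lap a b, ← Finset.sum_coe_sort pc
      (fun S => eps S * matD a (eT S) * matD b (eT Sᶜ))]
  have hw : LinearIndependent ℝ w := by
    rw [Fintype.linearIndependent_iff]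
    intro g hg
    have key : ∀ b : Fin r → tau r → ℝ,
        (∑ i, g (Sum.inl i) * matD (u i) b) + (∑ i, g (Sum.inr i) * matD (v i) b) = 0 := by
      intro b
      have h0 : pair b (∑ α, g α • w α) = 0 := by rw [hg, map_zero]
      rw [map_sum] at h0
      simp only [_root_.map_smul, smul_eq_mul] at h0
      rw [Fintype.sum_sum_type] at h0
      simpa only [w, Sum.elim_inl, Sum.elim_inr, hpair] using h0
    have hv0 : ∀ p, g (Sum.inr p) = 0 := by
      intro p
      have h0 := key (u p)
      have hz : ∑ i : ι, g (Sum.inl i) * matD (u i) (u p) = 0 :=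
        Finset.sum_eq_zero fun i _ => by rw [huu i p, mul_zero]
      rw [hz, zero_add,
        Finset.sum_eq_single p (fun i _ hip => by rw [hvu' i p hip, mul_zero])
          (fun h => absurd (Finset.mem_univ p) h)] at h0
      exact (mul_eq_zero.1 h0).resolve_right (hvu p)
    have hu0 : ∀ p, g (Sum.inl p) = 0 := by
      intro p
      have h0 := key (v p)
      have hz : ∑ i : ι, g (Sum.inr i) * matD (v i) (v p) = 0 :=
        Finset.sum_eq_zero fun i _ => by rw [hv0 i, zero_mul]
      rw [hz, add_zero,
        Finset.sum_eq_single p (fun i _ hip => by rw [huv' i p hip, mul_zero])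
          (fun h => absurd (Finset.mem_univ p) h)] at h0
      exact (mul_eq_zero.1 h0).resolve_right (huv p)
    intro α
    cases α with
    | inl p => exact hu0 p
    | inr p => exact hv0 p
  have hcard := hw.fintype_card_le_finrank
  rw [Module.finrank_fintype_fun_eq_card, Fintype.card_sum, Fintype.card_coe, hpc,
    Finset.card_powersetCard, Finset.card_univ, card_tau] at hcard
  omega


/-! ## Part B : polynomial subspaces -/

variable {n : ℕ}

/-- The polynomial `∏_{v ∈ S} (X - v)`. -/
def fP (S : Finset (Fin n)) : ℝ[X] := ∏ v ∈ S, (X - C ((v : ℕ) : ℝ))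

lemma fP_monic (S : Finset (Fin n)) : (fP S).Monic :=
  monic_prod_of_monic _ _ fun v _ => monic_X_sub_C _

lemma fP_ne_zero (S : Finset (Fin n)) : fP S ≠ 0 := (fP_monic S).ne_zero

lemma fP_natDegree (S : Finset (Fin n)) : (fP S).natDegree = S.card := by
  rw [fP, Polynomial.natDegree_prod _ _ (fun v _ => Polynomial.X_sub_C_ne_zero _)]
  rw [Finset.sum_congr rfl (fun v _ => Polynomial.natDegree_X_sub_C _)]
  rw [Finset.sum_const, smul_eq_mul, mul_one]

lemma fP_union {S T : Finset (Fin n)} (h : Disjoint S T) : fP (S ∪ T) = fP S * fP T :=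
  Finset.prod_union h

lemma cast_inj_fin : Function.Injective (fun v : Fin n => ((v : ℕ) : ℝ)) := by
  intro a b hab
  exact Fin.val_injective (Nat.cast_injective hab)

lemma fP_coprime {S T : Finset (Fin n)} (h : Disjoint S T) : IsCoprime (fP S) (fP T) := by
  rw [fP, fP]
  apply IsCoprime.prod_left
  intro v hv
  apply IsCoprime.prod_right
  intro w hw
  exact Polynomial.pairwise_coprime_X_sub_C cast_inj_fin
    (fun hvw => (Finset.disjoint_left.1 h hv (hvw ▸ hw)))

lemma fP_dvd {S T : Finset (Fin n)} (h : S ⊆ T) : fP S ∣ fP T :=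
  Finset.prod_dvd_prod_of_subset _ _ _ h

/-- The subspace `f_{Sᶜ} · ℝ[X]_{< r}` of `ℝ[X]`. -/
def Asp (r : ℕ) (S : Finset (Fin n)) : Submodule ℝ ℝ[X] :=
  (Polynomial.degreeLT ℝ r).map (LinearMap.mulLeft ℝ (fP Sᶜ))

lemma mem_Asp {r : ℕ} {S : Finset (Fin n)} {p : ℝ[X]} :
    p ∈ Asp r S ↔ ∃ q : ℝ[X], q.degree < (r : ℕ) ∧ p = fP Sᶜ * q := by
  simp only [Asp, Submodule.mem_map, Polynomial.mem_degreeLT]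
  constructor
  · rintro ⟨q, hq, rfl⟩
    exact ⟨q, hq, rfl⟩
  · rintro ⟨q, hq, rfl⟩
    exact ⟨q, hq, rfl⟩

lemma compl_inter_eq_left {S T : Finset (Fin n)} : (S ∩ T)ᶜ = Sᶜ ∪ (S \ T) := by
  ext x
  simp only [Finset.mem_compl, Finset.mem_inter, Finset.mem_union, Finset.mem_sdiff]
  tauto

lemma fP_mem_Asp {r k t : ℕ} {S T : Finset (Fin n)} (hS : S.card = k) (hT : T.card = k)
    (hst : t ≤ (S ∩ T).card) (hkr : k < t + r) :
    fP ((S ∩ T)ᶜ) ∈ Asp r S ⊓ Asp r T := by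
  have haux : ∀ U V : Finset (Fin n), U.card = k → t ≤ (U ∩ V).card →
      fP ((U ∩ V)ᶜ) ∈ Asp r U := by
    intro U V hU hUV
    rw [mem_Asp]
    refine ⟨fP (U \ V), ?_, ?_⟩
    · have hcard : (U ∩ V).card + (U \ V).card = k := by
        rw [Finset.card_inter_add_card_sdiff, hU]
      rcases eq_or_ne (fP (U \ V) : ℝ[X]) 0 with h0 | h0
      · exact absurd h0 (fP_ne_zero _)
      · rw [Polynomial.degree_eq_natDegree h0, fP_natDegree, Nat.cast_lt]
        omega
    · rw [← fP_union]
      · congr 1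
        exact compl_inter_eq_left
      · rw [Finset.disjoint_left]
        intro a ha
        rw [Finset.mem_compl] at ha
        simp only [Finset.mem_sdiff, not_and]
        intro haU
        exact absurd haU ha
  constructor
  · exact haux S T hS hst
  · rw [Finset.inter_comm] at hst ⊢
    exact haux T S hT hst

lemma Asp_inf_eq_bot {r k t : ℕ} {S T : Finset (Fin n)} (hS : S.card = k)
    (hst : (S ∩ T).card < t) (hrt : r + t ≤ k + 1) :
    Asp r S ⊓ Asp r T = ⊥ := by
  rw [eq_bot_iff]
  intro x hx
  obtain ⟨hx1, hx2⟩ := Submodule.mem_inf.1 hx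
  obtain ⟨q, hq, rfl⟩ := mem_Asp.1 hx1
  obtain ⟨q', hq', heq⟩ := mem_Asp.1 hx2
  rw [Submodule.mem_bot]
  rcases eq_or_ne q 0 with rfl | hq0
  · rw [mul_zero]
  · exfalso
    have hdvd1 : fP (S \ T) ∣ fP Tᶜ := by
      apply fP_dvd
      intro a ha
      rw [Finset.mem_compl]
      exact (Finset.mem_sdiff.1 ha).2
    have hdvd2 : fP (S \ T) ∣ fP Sᶜ * q := by
      rw [heq]
      exact hdvd1.mul_right _
    have hcop : IsCoprime (fP (S \ T) : ℝ[X]) (fP Sᶜ) := by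
      apply fP_coprime
      rw [Finset.disjoint_left]
      intro a ha
      rw [Finset.mem_compl, not_not]
      exact (Finset.mem_sdiff.1 ha).1
    have hdvdq : fP (S \ T) ∣ q := hcop.dvd_of_dvd_mul_left hdvd2
    have hdeg := Polynomial.natDegree_le_of_dvd hdvdq hq0
    rw [fP_natDegree] at hdeg
    have hq'' : q.natDegree < r := (Polynomial.natDegree_lt_iff_degree_lt hq0).2 hq
    have hcard : (S ∩ T).card + (S \ T).card = k := by
      rw [Finset.card_inter_add_card_sdiff, hS]
    omega

instance degreeLT_fd (m : ℕ) : FiniteDimensional ℝ (Polynomial.degreeLT ℝ m) :=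
  Module.Finite.equiv (Polynomial.degreeLTEquiv ℝ m).symm

lemma finrank_degreeLT (m : ℕ) : finrank ℝ (Polynomial.degreeLT ℝ m) = m := by
  rw [(Polynomial.degreeLTEquiv ℝ m).finrank_eq, Module.finrank_fintype_fun_eq_card,
    Fintype.card_fin]

lemma mulLeft_injective {f : ℝ[X]} (hf : f ≠ 0) :
    Function.Injective (LinearMap.mulLeft ℝ f) := by
  intro a b hab
  simp only [LinearMap.mulLeft_apply] at hab
  exact mul_left_cancel₀ hf hab

instance Asp_fd (r : ℕ) (S : Finset (Fin n)) : FiniteDimensional ℝ (Asp r S) :=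
  Module.Finite.equiv (Submodule.equivMapOfInjective _
    (mulLeft_injective (fP_ne_zero Sᶜ)) (Polynomial.degreeLT ℝ r))

lemma finrank_Asp (r : ℕ) (S : Finset (Fin n)) : finrank ℝ (Asp r S) = r := by
  rw [Asp, ← LinearEquiv.finrank_eq (Submodule.equivMapOfInjective _
    (mulLeft_injective (fP_ne_zero Sᶜ)) (Polynomial.degreeLT ℝ r)), finrank_degreeLT]

lemma Asp_le_degreeLT {r k : ℕ} {S : Finset (Fin n)} (hS : S.card = k) (hkn : k ≤ n) :
    Asp r S ≤ Polynomial.degreeLT ℝ ((n - k) + r) := by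
  intro x hx
  obtain ⟨q, hq, rfl⟩ := mem_Asp.1 hx
  rw [Polynomial.mem_degreeLT]
  rcases eq_or_ne q 0 with rfl | h
  · rw [mul_zero, Polynomial.degree_zero]
    exact WithBot.bot_lt_coe _
  · rw [Polynomial.degree_mul, Polynomial.degree_eq_natDegree (fP_ne_zero _),
      Polynomial.degree_eq_natDegree h, fP_natDegree]
    have h1 : (Sᶜ : Finset (Fin n)).card = n - k := by
      rw [Finset.card_compl, hS, Fintype.card_fin]
    have h2 : q.natDegree < r := (Polynomial.natDegree_lt_iff_degree_lt h).2 hq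
    rw [h1, ← Nat.cast_add, Nat.cast_lt]
    omega

/-! ## Part C : coefficient embedding and compression -/

/-- Truncated coefficient map. -/
def coeffMap (D : ℕ) : ℝ[X] →ₗ[ℝ] (Fin D → ℝ) :=
  LinearMap.pi fun i => Polynomial.lcoeff ℝ (i : ℕ)

lemma coeffMap_eq_zero {D : ℕ} {p : ℝ[X]} (hp : p ∈ Polynomial.degreeLT ℝ D)
    (h : coeffMap D p = 0) : p = 0 := by
  refine Polynomial.ext fun i => ?_
  rw [Polynomial.coeff_zero]
  by_cases hi : i < D
  · have := congrFun h ⟨i, hi⟩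
    simpa [coeffMap, Polynomial.lcoeff] using this
  · refine Polynomial.coeff_eq_zero_of_degree_lt (lt_of_lt_of_le (Polynomial.mem_degreeLT.1 hp) ?_)
    exact_mod_cast Nat.le_of_not_lt hi

lemma submodule_ne_top_exists {V : Type} [AddCommGroup V] [Module ℝ V]
    {W : Submodule ℝ V} (h : W ≠ ⊤) : ∃ u, u ∉ W := by
  by_contra hc
  push_neg at hc
  exact h (Submodule.eq_top_iff'.2 hc)

lemma exists_not_mem_of_forall_ne_top {V : Type} [AddCommGroup V] [Module ℝ V]
    (ws : Finset (Submodule ℝ V)) (h : ∀ W ∈ ws, W ≠ ⊤) : ∃ z : V, ∀ W ∈ ws, z ∉ W := by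
  classical
  induction ws using Finset.induction_on with
  | empty => exact ⟨0, by simp⟩
  | @insert W₀ ws hW₀s ih =>
    obtain ⟨z, hz⟩ := ih (fun W' hW' => h W' (Finset.mem_insert_of_mem hW'))
    by_cases hzW : z ∉ W₀
    · refine ⟨z, fun W' hW' => ?_⟩
      rcases Finset.mem_insert.1 hW' with rfl | hmem
      · exact hzW
      · exact hz W' hmem
    · push_neg at hzW
      obtain ⟨u, hu⟩ := submodule_ne_top_exists (h W₀ (Finset.mem_insert_self _ _))
      have key : ∀ W' ∈ insert W₀ ws, {c : ℝ | z + c • u ∈ W'}.Subsingleton := by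
        intro W' hW' c hc c' hc'
        by_contra hne
        have hu' : u ∈ W' := by
          have h3 : (c - c') • u ∈ W' := by
            have h4 := W'.sub_mem hc hc'
            have h5 : z + c • u - (z + c' • u) = (c - c') • u := by
              rw [sub_smul]; abel
            rwa [h5] at h4
          have h6 := W'.smul_mem (c - c')⁻¹ h3
          rwa [smul_smul, inv_mul_cancel₀ (sub_ne_zero.2 hne), one_smul] at h6
        have hz' : z ∈ W' := by
          have h7 := W'.sub_mem hc (W'.smul_mem c hu')
          simpa using h7
        rcases Finset.mem_insert.1 hW' with rfl | hmem
        · exact hu hu'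
        · exact hz W' hmem hz'
      have hBad : {c : ℝ | ∃ W' ∈ insert W₀ ws, z + c • u ∈ W'}.Finite := by
        have hset : {c : ℝ | ∃ W' ∈ insert W₀ ws, z + c • u ∈ W'} =
            ⋃ W' ∈ (insert W₀ ws : Finset (Submodule ℝ V)), {c : ℝ | z + c • u ∈ W'} := by
          ext c
          simp
        rw [hset]
        exact Set.Finite.biUnion (insert W₀ ws).finite_toSet
          (fun W' hW' => (key W' hW').finite)
      obtain ⟨c, hc⟩ := (Set.Finite.infinite_compl hBad).nonempty
      refine ⟨z + c • u, fun W' hW' hmem => ?_⟩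
      exact hc ⟨W', hW', hmem⟩

lemma exists_compression : ∀ (N : ℕ) (V : Type) [AddCommGroup V] [Module ℝ V]
    [FiniteDimensional ℝ V], finrank ℝ V ≤ N → ∀ (d : ℕ) (ws : Finset (Submodule ℝ V)),
    (∀ W ∈ ws, finrank ℝ W ≤ d) →
    ∃ Φ : V →ₗ[ℝ] (Fin d → ℝ), ∀ W ∈ ws, Disjoint (LinearMap.ker Φ) W := by
  intro N
  induction N with
  | zero =>
    intro V _ _ _ hV d ws _
    haveI : Subsingleton V := by
      rw [← Module.finrank_zero_iff (R := ℝ)]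
      omega
    refine ⟨0, fun W _ => ?_⟩
    rw [Submodule.disjoint_def]
    intro x _ _
    exact Subsingleton.elim x 0
  | succ N ih =>
    intro V _ _ _ hV d ws hws
    classical
    by_cases hVd : finrank ℝ V ≤ d
    · -- an injective map exists
      let b := Module.finBasis ℝ V
      let Φ : V →ₗ[ℝ] (Fin d → ℝ) := LinearMap.pi fun i : Fin d =>
        if h : (i : ℕ) < finrank ℝ V then b.coord ⟨i, h⟩ else 0
      have hker : ∀ x, Φ x = 0 → x = 0 := by
        intro x hx
        refine (Basis.forall_coord_eq_zero_iff b).1 (fun j => ?_)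
        have hjd : (j : ℕ) < d := lt_of_lt_of_le j.2 hVd
        have h2 := congrFun hx ⟨j, hjd⟩
        simp only [LinearMap.pi_apply, Pi.zero_apply, Φ] at h2
        rw [dif_pos (show ((⟨(j : ℕ), hjd⟩ : Fin d) : ℕ) < finrank ℝ V from j.2)] at h2
        simpa using h2
      refine ⟨Φ, fun W _ => ?_⟩
      rw [Submodule.disjoint_def]
      intro x hx _
      exact hker x (LinearMap.mem_ker.1 hx)
    · push_neg at hVd
      have hne : ∀ W ∈ ws, W ≠ ⊤ := by
        intro W hW hT
        have h1 := hws W hW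
        rw [hT, finrank_top] at h1
        omega
      haveI : Nontrivial V := nontrivial_of_finrank_pos (by omega : 0 < finrank ℝ V)
      obtain ⟨z, hz⟩ := exists_not_mem_of_forall_ne_top (insert (⊥ : Submodule ℝ V) ws) (fun W hW => by
        rcases Finset.mem_insert.1 hW with rfl | hmem
        · exact bot_ne_top
        · exact hne W hmem)
      have hz0 : z ≠ 0 := fun h => hz ⊥ (Finset.mem_insert_self _ _) (by simp [h])
      have hzw : ∀ W ∈ ws, z ∉ W := fun W hW => hz W (Finset.mem_insert_of_mem hW)
      set Z := Submodule.span ℝ ({z} : Set V) with hZ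
      have hq : finrank ℝ (V ⧸ Z) ≤ N := by
        have h1 := Submodule.finrank_quotient_add_finrank Z
        rw [finrank_span_singleton hz0] at h1
        omega
      obtain ⟨Φ', hΦ'⟩ := ih (V ⧸ Z) hq d (ws.image (Submodule.map Z.mkQ))
        (fun W' hW' => by
          obtain ⟨W, hW, rfl⟩ := Finset.mem_image.1 hW'
          exact le_trans (Submodule.finrank_map_le _ _) (hws W hW))
      refine ⟨Φ'.comp Z.mkQ, fun W hW => ?_⟩
      rw [Submodule.disjoint_def]
      intro x hx hxW
      have h1 : Z.mkQ x ∈ LinearMap.ker Φ' := by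
        rw [LinearMap.mem_ker]
        have := LinearMap.mem_ker.1 hx
        simpa [LinearMap.comp_apply] using this
      have h2 : Z.mkQ x ∈ W.map Z.mkQ := Submodule.mem_map_of_mem hxW
      have h3 : Z.mkQ x = 0 :=
        Submodule.disjoint_def.1 (hΦ' _ (Finset.mem_image_of_mem _ hW)) _ h1 h2
      have h4 : x ∈ Z := by
        rwa [Submodule.mkQ_apply, Submodule.Quotient.mk_eq_zero] at h3
      obtain ⟨c, rfl⟩ := Submodule.mem_span_singleton.1 h4
      rcases eq_or_ne c 0 with rfl | hc
      · rw [zero_smul]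
      · exfalso
        have h5 : z ∈ W := by
          have h6 := W.smul_mem c⁻¹ hxW
          rwa [smul_smul, inv_mul_cancel₀ hc, one_smul] at h6
        exact hzw W hW h5

lemma finrank_map_of_inj_on {V W : Type} [AddCommGroup V] [Module ℝ V] [AddCommGroup W]
    [Module ℝ W] (f : V →ₗ[ℝ] W) (p : Submodule ℝ V) [FiniteDimensional ℝ p]
    (h : ∀ x ∈ p, f x = 0 → x = 0) : finrank ℝ (p.map f) = finrank ℝ p := by
  have h1 := LinearMap.finrank_range_add_finrank_ker (f.domRestrict p)
  have h2 : LinearMap.ker (f.domRestrict p) = ⊥ := by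
    rw [LinearMap.ker_eq_bot']
    intro m hm
    exact Subtype.ext (h m.1 m.2 (by simpa [LinearMap.domRestrict_apply] using hm))
  rw [h2, finrank_bot, add_zero, LinearMap.range_domRestrict] at h1
  exact h1

lemma map_inf_of_inj_on {V W : Type} [AddCommGroup V] [Module ℝ V] [AddCommGroup W]
    [Module ℝ W] (f : V →ₗ[ℝ] W) (p q : Submodule ℝ V)
    (h : ∀ x ∈ p ⊔ q, f x = 0 → x = 0) :
    (p.map f) ⊓ (q.map f) = (p ⊓ q).map f := by
  apply le_antisymm
  · intro y hy
    obtain ⟨hyp, hyq⟩ := Submodule.mem_inf.1 hy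
    obtain ⟨a, ha, rfl⟩ := Submodule.mem_map.1 hyp
    obtain ⟨b, hb, hba⟩ := Submodule.mem_map.1 hyq
    have hab : a - b = 0 := by
      refine h _ (Submodule.sub_mem _ (Submodule.mem_sup_left ha) (Submodule.mem_sup_right hb)) ?_
      rw [map_sub, hba, sub_self]
    have hab' : a = b := by
      have := sub_eq_zero.1 hab
      exact this
    exact Submodule.mem_map_of_mem (Submodule.mem_inf.2 ⟨ha, hab' ▸ hb⟩)
  · exact le_inf (Submodule.map_mono inf_le_left) (Submodule.map_mono inf_le_right)


/-! ## Part D : the key bound -/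

def toTau (r : ℕ) : (Fin (r + r) → ℝ) ≃ₗ[ℝ] (tau r → ℝ) :=
  LinearEquiv.funCongrLeft ℝ ℝ finSumFinEquiv

lemma span_range_basis_coe {V : Type} [AddCommGroup V] [Module ℝ V] {P : Submodule ℝ V}
    {m : ℕ} (b : Basis (Fin m) ℝ P) :
    Submodule.span ℝ (Set.range (fun j => (b j : V))) = P := by
  have h1 : (fun j => (b j : V)) = P.subtype ∘ b := rfl
  rw [h1, Set.range_comp, ← Submodule.map_span, b.span_eq, Submodule.map_top,
    Submodule.range_subtype]

lemma li_basis_coe {V : Type} [AddCommGroup V] [Module ℝ V] {P : Submodule ℝ V}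
    {m : ℕ} (b : Basis (Fin m) ℝ P) :
    LinearIndependent ℝ (fun j => (b j : V)) :=
  b.linearIndependent.map' P.subtype P.ker_subtype

lemma matD_ne_zero_of_li {r : ℕ} {A C : Fin r → tau r → ℝ}
    (h : LinearIndependent ℝ (Sum.elim A C)) : matD A C ≠ 0 := by
  have hun : IsUnit (Matrix.of (Sum.elim A C)) := by
    rw [← Matrix.linearIndependent_rows_iff_isUnit]
    exact h
  rw [matD]
  exact isUnit_iff_ne_zero.1 ((Matrix.isUnit_iff_isUnit_det _).1 hun)

lemma matD_eq_zero_of_common {r : ℕ} {A C : Fin r → tau r → ℝ} {x : tau r → ℝ} (hx : x ≠ 0)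
    (hxa : x ∈ Submodule.span ℝ (Set.range A)) (hxc : x ∈ Submodule.span ℝ (Set.range C)) :
    matD A C = 0 := by
  by_contra h
  have hli : LinearIndependent ℝ (Sum.elim A C) :=
    Matrix.linearIndependent_rows_iff_isUnit.2
      ((Matrix.isUnit_iff_isUnit_det _).2 (isUnit_iff_ne_zero.2 h))
  rw [linearIndependent_sum] at hli
  obtain ⟨-, -, hdisj⟩ := hli
  refine hx (Submodule.disjoint_def.1 hdisj x ?_ ?_)
  · simpa [Sum.elim_comp_inl] using hxa
  · simpa [Sum.elim_comp_inr] using hxc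

theorem key_bound {n k t : ℕ} (ht : 1 ≤ t) (htk : t < k) (hkn : k ≤ n) {ι : Type} [Fintype ι]
    (G E : ι → Finset (Fin n))
    (hGcard : ∀ i, (G i).card = k) (hEcard : ∀ i, (E i).card = k)
    (hGG : ∀ i j, t ≤ ((G i) ∩ (G j)).card)
    (hGE : ∀ i j, i ≠ j → t ≤ ((G i) ∩ (E j)).card)
    (hD : ∀ i, ((G i) ∩ (E i)).card < t) :
    Fintype.card ι ≤ (2 * (k - t) + 1).choose (k - t) := by
  classical
  set r := k - t + 1 with hrdef
  have hr0 : 0 < r := Nat.succ_pos _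
  have hkr : k < t + r := by omega
  have hrt : r + t ≤ k + 1 := by omega
  set Dd := (n - k) + r with hDd
  set Θ := coeffMap Dd with hΘ
  have hsup_le : ∀ i : ι, Asp r (G i) ⊔ Asp r (E i) ≤ Polynomial.degreeLT ℝ Dd := fun i =>
    sup_le (Asp_le_degreeLT (hGcard i) hkn) (Asp_le_degreeLT (hEcard i) hkn)
  set ws : Finset (Submodule ℝ (Fin Dd → ℝ)) :=
    Finset.image (fun i => (Asp r (G i) ⊔ Asp r (E i)).map Θ) Finset.univ with hws_def
  have hws : ∀ W ∈ ws, finrank ℝ W ≤ r + r := by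
    intro W hW
    obtain ⟨i, -, rfl⟩ := Finset.mem_image.1 hW
    calc finrank ℝ ↥((Asp r (G i) ⊔ Asp r (E i)).map Θ)
        ≤ finrank ℝ ↥(Asp r (G i) ⊔ Asp r (E i)) := Submodule.finrank_map_le _ _
      _ ≤ r + r := by
          have h1 := Submodule.finrank_sup_add_finrank_inf_eq (Asp r (G i)) (Asp r (E i))
          have h2 := finrank_Asp (n := n) r (G i)
          have h3 := finrank_Asp (n := n) r (E i)
          omega
  obtain ⟨Φ, hΦ⟩ := exists_compression Dd (Fin Dd → ℝ)
    (by rw [Module.finrank_fintype_fun_eq_card, Fintype.card_fin]) (r + r) ws hws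
  set Ψ : ℝ[X] →ₗ[ℝ] (tau r → ℝ) := (((toTau r) : (Fin (r+r) → ℝ) →ₗ[ℝ] (tau r → ℝ)).comp Φ).comp Θ
    with hΨdef
  have hΨinj : ∀ i : ι, ∀ x ∈ Asp r (G i) ⊔ Asp r (E i), Ψ x = 0 → x = 0 := by
    intro i x hx hΨx
    have h1 : Φ (Θ x) = 0 := by
      have h0 : (toTau r) (Φ (Θ x)) = 0 := hΨx
      exact (LinearEquiv.map_eq_zero_iff _).1 h0
    have h2 : Θ x ∈ (Asp r (G i) ⊔ Asp r (E i)).map Θ := Submodule.mem_map_of_mem hx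
    have h3 : Θ x = 0 := Submodule.disjoint_def.1
      (hΦ _ (Finset.mem_image_of_mem _ (Finset.mem_univ i))) _ (LinearMap.mem_ker.2 h1) h2
    exact coeffMap_eq_zero (hsup_le i hx) h3
  set PG : ι → Submodule ℝ (tau r → ℝ) := fun i => (Asp r (G i)).map Ψ with hPG
  set PE : ι → Submodule ℝ (tau r → ℝ) := fun i => (Asp r (E i)).map Ψ with hPE
  have hPGrank : ∀ i, finrank ℝ (PG i) = r := fun i => by
    rw [hPG, finrank_map_of_inj_on Ψ (Asp r (G i))
      (fun x hx => hΨinj i x (Submodule.mem_sup_left hx)), finrank_Asp]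
  have hPErank : ∀ i, finrank ℝ (PE i) = r := fun i => by
    rw [hPE, finrank_map_of_inj_on Ψ (Asp r (E i))
      (fun x hx => hΨinj i x (Submodule.mem_sup_right hx)), finrank_Asp]
  set bu : (i : ι) → Basis (Fin r) ℝ (PG i) :=
    fun i => Module.finBasisOfFinrankEq ℝ _ (hPGrank i) with hbu
  set bv : (i : ι) → Basis (Fin r) ℝ (PE i) :=
    fun i => Module.finBasisOfFinrankEq ℝ _ (hPErank i) with hbv
  set u : ι → Fin r → (tau r → ℝ) := fun i j => ((bu i j : tau r → ℝ)) with hu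
  set v : ι → Fin r → (tau r → ℝ) := fun i j => ((bv i j : tau r → ℝ)) with hv
  have hspanu : ∀ i, Submodule.span ℝ (Set.range (u i)) = PG i := fun i =>
    span_range_basis_coe (bu i)
  have hspanv : ∀ i, Submodule.span ℝ (Set.range (v i)) = PE i := fun i =>
    span_range_basis_coe (bv i)
  -- common nonzero vectors give vanishing determinants
  have hcommon : ∀ (i j : ι), i ≠ j → ∀ (Si Sj : Finset (Fin n)), Si.card = k → Sj.card = k →
      t ≤ (Si ∩ Sj).card → (Si = G i ∨ Si = E i) → (Sj = G j ∨ Sj = E j) →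
      ∃ x : tau r → ℝ, x ≠ 0 ∧ x ∈ (Asp r Si).map Ψ ∧ x ∈ (Asp r Sj).map Ψ := by
    intro i j hij Si Sj hSi hSj hst hSiok hSjok
    have hmem := fP_mem_Asp hSi hSj hst hkr
    have hp0 : fP ((Si ∩ Sj)ᶜ) ≠ 0 := fP_ne_zero _
    have hmemi : fP ((Si ∩ Sj)ᶜ) ∈ Asp r (G i) ⊔ Asp r (E i) := by
      rcases hSiok with rfl | rfl
      · exact Submodule.mem_sup_left hmem.1
      · exact Submodule.mem_sup_right hmem.1
    refine ⟨Ψ (fP ((Si ∩ Sj)ᶜ)), ?_, Submodule.mem_map_of_mem hmem.1,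
      Submodule.mem_map_of_mem hmem.2⟩
    intro h0
    exact hp0 (hΨinj i _ hmemi h0)
  -- vanishing determinants
  have huu : ∀ i j, matD (u i) (u j) = 0 := by
    intro i j
    rcases eq_or_ne i j with rfl | hij
    · refine matD_eq_zero_of_common (x := u i ⟨0, hr0⟩) ?_ ?_ ?_
      · intro h0
        exact (bu i).ne_zero ⟨0, hr0⟩ (by exact_mod_cast Subtype.ext h0)
      · exact Submodule.subset_span (Set.mem_range_self _)
      · exact Submodule.subset_span (Set.mem_range_self _)
    · obtain ⟨x, hx0, hx1, hx2⟩ := hcommon i j hij (G i) (G j) (hGcard i) (hGcard j)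
        (hGG i j) (Or.inl rfl) (Or.inl rfl)
      exact matD_eq_zero_of_common hx0 (by rw [hspanu i]; exact hx1)
        (by rw [hspanu j]; exact hx2)
  have huv' : ∀ i j, i ≠ j → matD (u i) (v j) = 0 := by
    intro i j hij
    obtain ⟨x, hx0, hx1, hx2⟩ := hcommon i j hij (G i) (E j) (hGcard i) (hEcard j)
      (hGE i j hij) (Or.inl rfl) (Or.inr rfl)
    exact matD_eq_zero_of_common hx0 (by rw [hspanu i]; exact hx1)
      (by rw [hspanv j]; exact hx2)
  have hvu' : ∀ i j, i ≠ j → matD (v i) (u j) = 0 := by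
    intro i j hij
    have hGE' : t ≤ ((E i) ∩ (G j)).card := by
      rw [Finset.inter_comm]
      exact hGE j i (Ne.symm hij)
    obtain ⟨x, hx0, hx1, hx2⟩ := hcommon i j hij (E i) (G j) (hEcard i) (hGcard j)
      hGE' (Or.inr rfl) (Or.inl rfl)
    exact matD_eq_zero_of_common hx0 (by rw [hspanv i]; exact hx1)
      (by rw [hspanu j]; exact hx2)
  -- nonvanishing diagonal determinants
  have hdisj : ∀ i, Disjoint (PG i) (PE i) := by
    intro i
    rw [disjoint_iff, hPG, hPE, map_inf_of_inj_on Ψ _ _ (hΨinj i),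
      Asp_inf_eq_bot (hGcard i) (hD i) hrt, Submodule.map_bot]
  have huv : ∀ i, matD (u i) (v i) ≠ 0 := by
    intro i
    apply matD_ne_zero_of_li
    rw [linearIndependent_sum]
    refine ⟨by simpa using li_basis_coe (bu i), by simpa using li_basis_coe (bv i), ?_⟩
    rw [Sum.elim_comp_inl, Sum.elim_comp_inr, hspanu i, hspanv i]
    exact hdisj i
  have hvu : ∀ i, matD (v i) (u i) ≠ 0 := by
    intro i
    apply matD_ne_zero_of_li
    rw [linearIndependent_sum]
    refine ⟨by simpa using li_basis_coe (bv i), by simpa using li_basis_coe (bu i), ?_⟩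
    rw [Sum.elim_comp_inl, Sum.elim_comp_inr, hspanu i, hspanv i]
    exact (hdisj i).symm
  have hmain := det_system_card_le hr0 u v huv hvu huv' hvu' huu
  -- arithmetic
  set s := k - t with hs
  have h1 : r + r = (2 * s + 1) + 1 := by omega
  have h2 : (r + r).choose r = (2 * s + 1).choose s + (2 * s + 1).choose (s + 1) := by
    rw [h1, show r = s + 1 from by omega]
    exact Nat.choose_succ_succ _ _
  have h3 : (2 * s + 1).choose (s + 1) = (2 * s + 1).choose s := by
    have h4 := Nat.choose_symm (show s + 1 ≤ 2 * s + 1 by omega)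
    rw [show 2 * s + 1 - (s + 1) = s from by omega] at h4
    exact h4.symm
  omega


/-! ## Part E : maximal families and generating sets -/

def clos (n k t : ℕ) (S : Finset (Finset (Fin n))) : Finset (Finset (Fin n)) :=
  Finset.univ.filter fun e => e.card = k ∧ ∀ f ∈ S, t ≤ (e ∩ f).card

lemma mem_clos {n k t : ℕ} {S : Finset (Finset (Fin n))} {e : Finset (Fin n)} :
    e ∈ clos n k t S ↔ e.card = k ∧ ∀ f ∈ S, t ≤ (e ∩ f).card := by
  simp [clos]

lemma clos_anti {n k t : ℕ} {S S' : Finset (Finset (Fin n))} (h : S ⊆ S') :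
    clos n k t S' ⊆ clos n k t S := by
  intro e he
  rw [mem_clos] at he ⊢
  exact ⟨he.1, fun f hf => he.2 f (h hf)⟩

lemma clos_self_of_max {n k t : ℕ} (htk : t ≤ k) {H : Finset (Finset (Fin n))}
    (hH : IsMaximalTIntersectingHyp n k t H) : clos n k t H = H := by
  apply Finset.Subset.antisymm
  · intro e he
    rw [mem_clos] at he
    have huniform : IsKUniform n k (insert e H) := by
      intro f hf
      rcases Finset.mem_insert.1 hf with rfl | hf'
      · exact he.1
      · exact hH.1 f hf'
    have hint : IsTIntersectingHyp n t (insert e H) := by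
      intro a ha b hb
      rcases Finset.mem_insert.1 ha with rfl | ha' <;> rcases Finset.mem_insert.1 hb with rfl | hb'
      · rw [Finset.inter_self, he.1]
        exact htk
      · exact he.2 b hb'
      · rw [Finset.inter_comm]
        exact he.2 a ha'
      · exact hH.2.1 a ha' b hb'
    have heq := hH.2.2 _ huniform hint (Finset.subset_insert _ _)
    rw [heq]
    exact Finset.mem_insert_self _ _
  · intro e he
    rw [mem_clos]
    exact ⟨hH.1 e he, fun f hf => hH.2.1 e he f hf⟩

lemma exists_min_generator {n k t : ℕ} (htk : t ≤ k) {H : Finset (Finset (Fin n))}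
    (hH : IsMaximalTIntersectingHyp n k t H) :
    ∃ S, S ⊆ H ∧ clos n k t S = H ∧
      ∀ S', S' ⊆ H → clos n k t S' = H → S.card ≤ S'.card := by
  classical
  have hne : (H.powerset.filter fun S => clos n k t S = H).Nonempty :=
    ⟨H, Finset.mem_filter.2 ⟨Finset.mem_powerset_self _, clos_self_of_max htk hH⟩⟩
  obtain ⟨S, hS, hmin⟩ := Finset.exists_min_image _ Finset.card hne
  rw [Finset.mem_filter, Finset.mem_powerset] at hS
  exact ⟨S, hS.1, hS.2, fun S' h1 h2 =>
    hmin S' (Finset.mem_filter.2 ⟨Finset.mem_powerset.2 h1, h2⟩)⟩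

lemma generator_witness {n k t : ℕ} {H S : Finset (Finset (Fin n))}
    (hS : S ⊆ H) (hclos : clos n k t S = H)
    (hmin : ∀ S', S' ⊆ H → clos n k t S' = H → S.card ≤ S'.card) :
    ∀ g ∈ S, ∃ e : Finset (Fin n), e.card = k ∧ (e ∩ g).card < t ∧
      ∀ f ∈ S, f ≠ g → t ≤ (e ∩ f).card := by
  classical
  intro g hg
  have h1 : clos n k t (S.erase g) ≠ H := by
    intro heq
    have h2 := hmin (S.erase g) ((Finset.erase_subset _ _).trans hS) heq
    have h3 := Finset.card_erase_lt_of_mem hg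
    omega
  have h2 : H ⊆ clos n k t (S.erase g) := by
    rw [← hclos]
    exact clos_anti (Finset.erase_subset _ _)
  have h3 : ¬ (clos n k t (S.erase g) ⊆ H) := fun hsub =>
    h1 (Finset.Subset.antisymm hsub h2)
  obtain ⟨e, he1, he2⟩ := Finset.not_subset.1 h3
  rw [mem_clos] at he1
  refine ⟨e, he1.1, ?_, fun f hf hfg => he1.2 f (Finset.mem_erase.2 ⟨hfg, hf⟩)⟩
  by_contra hcon
  push_neg at hcon
  apply he2
  rw [← hclos, mem_clos]
  refine ⟨he1.1, fun f hf => ?_⟩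
  rcases eq_or_ne f g with rfl | hne
  · exact hcon
  · exact he1.2 f (Finset.mem_erase.2 ⟨hne, hf⟩)

lemma generator_card_le {n k t : ℕ} (ht : 1 ≤ t) (htk : t < k) (hkn : k ≤ n)
    {H S : Finset (Finset (Fin n))} (hH : IsMaximalTIntersectingHyp n k t H)
    (hS : S ⊆ H) (hclos : clos n k t S = H)
    (hmin : ∀ S', S' ⊆ H → clos n k t S' = H → S.card ≤ S'.card) :
    S.card ≤ (2 * (k - t) + 1).choose (k - t) := by
  classical
  have hwit := generator_witness hS hclos hmin
  choose e he1 he2 he3 using fun g : {x // x ∈ S} => hwit g.1 g.2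
  have hb := key_bound ht htk hkn (ι := {x // x ∈ S}) (fun g => g.1) e
    (fun g => hH.1 g.1 (hS g.2)) he1
    (fun i j => hH.2.1 i.1 (hS i.2) j.1 (hS j.2))
    (fun i j hij => by
      rw [Finset.inter_comm]
      exact he3 j i.1 i.2 (fun h => hij (Subtype.ext h)))
    (fun i => by
      rw [Finset.inter_comm]
      exact he2 i)
  rwa [Fintype.card_coe] at hb

/-! ## Part F : counting -/

lemma good_card {n k B : ℕ} :
    ((Finset.univ.powersetCard k : Finset (Finset (Fin n))).powerset.filter
      fun T => T.card ≤ B).card = ∑ i ∈ Finset.range (B + 1), (n.choose k).choose i := by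
  classical
  set Edges := (Finset.univ.powersetCard k : Finset (Finset (Fin n))) with hE
  have hb : Edges.powerset.filter (fun T => T.card ≤ B) =
      (Finset.range (B + 1)).biUnion (fun i => Finset.powersetCard i Edges) := by
    ext T
    simp only [Finset.mem_filter, Finset.mem_powerset, Finset.mem_biUnion, Finset.mem_range,
      Finset.mem_powersetCard, Nat.lt_succ_iff]
    constructor
    · rintro ⟨h1, h2⟩
      exact ⟨T.card, h2, h1, rfl⟩
    · rintro ⟨i, hi, h1, rfl⟩
      exact ⟨h1, hi⟩
  rw [hb, Finset.card_biUnion]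
  · refine Finset.sum_congr rfl fun i _ => ?_
    rw [Finset.card_powersetCard]
    congr 1
    rw [hE, Finset.card_powersetCard, Finset.card_univ, Fintype.card_fin]
  · intro x hx y hy hxy
    rw [Function.onFun, Finset.disjoint_left]
    intro a ha hay
    rw [Finset.mem_powersetCard] at ha hay
    exact hxy (by rw [← ha.2, hay.2])

lemma sum_choose_le_pow {N B : ℕ} (hN : 3 ≤ N) (hB : 3 ≤ B) :
    ∑ i ∈ Finset.range (B + 1), N.choose i ≤ N ^ B := by
  have key : ∀ i : ℕ, 2 ≤ i → 2 * N.choose i ≤ N ^ i := by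
    intro i hi
    calc 2 * N.choose i ≤ i.factorial * N.choose i :=
          Nat.mul_le_mul_right _ (le_trans hi (Nat.self_le_factorial i))
      _ = N.descFactorial i := (Nat.descFactorial_eq_factorial_mul_choose N i).symm
      _ ≤ N ^ i := Nat.descFactorial_le_pow _ _
  induction B, hB using Nat.le_induction with
  | base =>
    refine Nat.le_of_mul_le_mul_left ?_ (show 0 < 2 by norm_num)
    have h2 := key 2 (le_refl 2)
    have h3 := key 3 (by norm_num)
    rw [Finset.sum_range_succ, Finset.sum_range_succ, Finset.sum_range_succ,
      Finset.sum_range_one, Nat.choose_zero_right, Nat.choose_one_right]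
    have hq : 2 + 2 * N + N ^ 2 ≤ N ^ 3 := by nlinarith
    calc 2 * (1 + N + N.choose 2 + N.choose 3)
        = (2 + 2 * N) + 2 * N.choose 2 + 2 * N.choose 3 := by ring
      _ ≤ ((2 + 2 * N) + N ^ 2) + N ^ 3 :=
          Nat.add_le_add (Nat.add_le_add le_rfl h2) h3
      _ ≤ N ^ 3 + N ^ 3 := Nat.add_le_add hq le_rfl
      _ = 2 * N ^ 3 := by ring
  | succ B hB3 ih =>
    rw [Finset.sum_range_succ]
    refine Nat.le_of_mul_le_mul_left ?_ (show 0 < 2 by norm_num)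
    have h1 := key (B + 1) (by omega)
    have h2 : 2 * N ^ B ≤ N ^ (B + 1) := by
      rw [pow_succ]
      calc 2 * N ^ B = N ^ B * 2 := mul_comm _ _
        _ ≤ N ^ B * N := Nat.mul_le_mul_left _ (by omega)
    calc 2 * (∑ i ∈ Finset.range (B + 1), N.choose i + N.choose (B + 1))
        = 2 * ∑ i ∈ Finset.range (B + 1), N.choose i + 2 * N.choose (B + 1) := by ring
      _ ≤ 2 * N ^ B + N ^ (B + 1) := Nat.add_le_add (Nat.mul_le_mul_left 2 ih) h1
      _ ≤ N ^ (B + 1) + N ^ (B + 1) := Nat.add_le_add h2 le_rfl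
      _ = 2 * N ^ (B + 1) := by ring

end

end NMTIH

theorem number_of_maximal_t_intersecting_hypergraphs
    (n k t : ℕ) (ht : 1 ≤ t) (htk : t < k) (hkn : k < n) :
    Nat.card {H : Finset (Finset (Fin n)) // IsMaximalTIntersectingHyp n k t H} ≤
      ∑ i ∈ Finset.range ((2 * (k - t) + 1).choose (k - t) + 1), (n.choose k).choose i ∧
    ∑ i ∈ Finset.range ((2 * (k - t) + 1).choose (k - t) + 1), (n.choose k).choose i ≤
      (n.choose k) ^ ((2 * (k - t) + 1).choose (k - t)) := by
  classical
  have hkn' : k ≤ n := le_of_lt hkn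
  set B := (2 * (k - t) + 1).choose (k - t) with hB
  constructor
  · set Edges := (Finset.univ.powersetCard k : Finset (Finset (Fin n))) with hE
    set Good := Edges.powerset.filter (fun T => T.card ≤ B) with hGood
    have hcard : Good.card = ∑ i ∈ Finset.range (B + 1), (n.choose k).choose i :=
      NMTIH.good_card
    have hinj : ∃ F : {H : Finset (Finset (Fin n)) // IsMaximalTIntersectingHyp n k t H} →
        {T // T ∈ Good}, Function.Injective F := by
      have hgen := fun H : {H : Finset (Finset (Fin n)) // IsMaximalTIntersectingHyp n k t H} =>
        NMTIH.exists_min_generator (le_of_lt htk) H.2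
      choose S hS1 hS2 hS3 using hgen
      refine ⟨fun H => ⟨S H, ?_⟩, ?_⟩
      · rw [hGood, Finset.mem_filter, Finset.mem_powerset]
        constructor
        · intro x hx
          rw [hE, Finset.mem_powersetCard]
          exact ⟨Finset.subset_univ _, H.2.1 x (hS1 H hx)⟩
        · exact NMTIH.generator_card_le ht htk hkn' H.2 (hS1 H) (hS2 H) (hS3 H)
      · intro H1 H2 hEq
        have heq : S H1 = S H2 := congrArg Subtype.val hEq
        apply Subtype.ext
        rw [← hS2 H1, ← hS2 H2, heq]
    obtain ⟨F, hF⟩ := hinj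
    calc Nat.card {H : Finset (Finset (Fin n)) // IsMaximalTIntersectingHyp n k t H}
        ≤ Nat.card {T // T ∈ Good} := Nat.card_le_card_of_injective F hF
      _ = Good.card := Nat.card_eq_finsetCard _
      _ = _ := hcard
  · apply NMTIH.sum_choose_le_pow
    · calc 3 ≤ k + 1 := by omega
        _ = (k + 1).choose k := (Nat.choose_succ_self_right k).symm
        _ ≤ n.choose k := Nat.choose_le_choose k hkn
    · set s := k - t with hs
      have hs1 : 1 ≤ s := by omega
      calc 3 ≤ (s + 2) * (s + 1) / 2 := by
            rw [Nat.le_div_iff_mul_le (by norm_num)]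
            calc 3 * 2 = 6 := rfl
              _ ≤ (s + 2) * (s + 1) := Nat.mul_le_mul (show 3 ≤ s + 2 by omega) (show 2 ≤ s + 1 by omega)
        _ = (s + 2).choose 2 := by
            rw [Nat.choose_two_right, show s + 2 - 1 = s + 1 from rfl]
        _ = (s + 2).choose s := by
            have h4 := Nat.choose_symm (show s ≤ s + 2 by omega)
            rw [show s + 2 - s = 2 from by omega] at h4
            exact h4
        _ ≤ (2 * s + 1).choose s := Nat.choose_le_choose s (by omega)
end
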